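/- arXiv:2501.17364 — 3 statements merged into one kernel-verified Lean document; each statement's English description precedes it below -/
import Mathlib

section
/- (Mayer's lemma) Let x ∈ ℝ̃_ρ. The following are equivalent: (1) x is invertible in the ring ℝ̃_ρ and x ≥ 0; (2) every representative (x_ε) of x satisfies x_ε > 0 for all sufficiently small ε; (3) every representative (x_ε) satisfies: there exists m ∈ ℕ with x_ε > ρ_ε^m for ε small; (4) some representative (x_ε) satisfies: there exists m ∈ ℕ with x_ε > ρ_ε^m for ε small. -/
open Filter Topology

namespace RC

def F : Filter ℝ := nhdsWithin 0 (Set.Ioi 0)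

/-- A gauge: a net `ρ : (0,1] → (0,1]` with `ρ ε → 0` as `ε → 0⁺`. -/
def Gauge (ρ : ℝ → ℝ) : Prop :=
  (∀ ε ∈ Set.Ioc (0:ℝ) 1, ρ ε ∈ Set.Ioc (0:ℝ) 1) ∧ Tendsto ρ F (nhds 0)

/-- ρ-moderate real nets: `x_ε = O(ρ_ε^{-N})` for some `N`. -/
def Mod (ρ x : ℝ → ℝ) : Prop :=
  ∃ N : ℕ, ∃ C : ℝ, ∀ᶠ ε in F, |x ε| ≤ C * (ρ ε)⁻¹ ^ N

/-- ρ-negligible real nets: `x_ε = O(ρ_ε^{N})` for all `N`. -/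
def Ngl (ρ x : ℝ → ℝ) : Prop :=
  ∀ N : ℕ, ∃ C : ℝ, ∀ᶠ ε in F, |x ε| ≤ C * ρ ε ^ N

def Eqv (ρ x y : ℝ → ℝ) : Prop := Ngl ρ (x - y)

/-- The order on generalized numbers, at the level of representatives. -/
def leG (ρ x y : ℝ → ℝ) : Prop :=
  ∀ x', Mod ρ x' → Eqv ρ x' x → ∃ y', Mod ρ y' ∧ Eqv ρ y' y ∧ ∀ᶠ ε in F, x' ε ≤ y' ε

/-- Invertibility in the quotient ring, at the level of representatives. -/
def InvG (ρ x : ℝ → ℝ) : Prop := ∃ y, Mod ρ y ∧ Eqv ρ (x * y) 1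

def ltG (ρ x y : ℝ → ℝ) : Prop := leG ρ x y ∧ InvG ρ (y - x)

def posInv (ρ r : ℝ → ℝ) : Prop := ltG ρ 0 r

def ModC (ρ : ℝ → ℝ) (x : ℝ → ℂ) : Prop :=
  ∃ N : ℕ, ∃ C : ℝ, ∀ᶠ ε in F, ‖x ε‖ ≤ C * (ρ ε)⁻¹ ^ N

def NglC (ρ : ℝ → ℝ) (x : ℝ → ℂ) : Prop :=
  ∀ N : ℕ, ∃ C : ℝ, ∀ᶠ ε in F, ‖x ε‖ ≤ C * ρ ε ^ N

def EqvC (ρ : ℝ → ℝ) (x y : ℝ → ℂ) : Prop := NglC ρ (x - y)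

def InvC (ρ : ℝ → ℝ) (x : ℝ → ℂ) : Prop := ∃ y, ModC ρ y ∧ EqvC ρ (x * y) 1

noncomputable def absC (x : ℝ → ℂ) : ℝ → ℝ := fun ε => ‖x ε‖

section copylemmas
lemma eps_pos : ∀ᶠ ε in F, (0:ℝ) < ε := by
  have h : Set.Ioi (0:ℝ) ∈ F := self_mem_nhdsWithin
  filter_upwards [h] with ε hε; exact hε

lemma F_le_nhds : F ≤ nhds 0 := nhdsWithin_le_nhds

lemma eventually_lt_F (c : ℝ) (hc : 0 < c) : ∀ᶠ ε in F, ε < c :=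
  (gt_mem_nhds hc).filter_mono F_le_nhds

lemma rho_mem (hρ : Gauge ρ) : ∀ᶠ ε in F, 0 < ρ ε ∧ ρ ε ≤ 1 := by
  filter_upwards [eps_pos, eventually_lt_F 1 one_pos] with ε h1 h2
  exact hρ.1 ε ⟨h1, h2.le⟩

lemma rho_lt (hρ : Gauge ρ) (δ : ℝ) (hδ : 0 < δ) : ∀ᶠ ε in F, ρ ε < δ :=
  hρ.2.eventually (gt_mem_nhds hδ)

lemma ngl_small (hρ : Gauge ρ) {u : ℝ → ℝ} (hu : Ngl ρ u) (m : ℕ) :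
    ∀ᶠ ε in F, |u ε| ≤ ρ ε ^ m := by
  obtain ⟨C, hC⟩ := hu (m+1)
  have hD : (0:ℝ) < max C 1 := lt_of_lt_of_le one_pos (le_max_right C 1)
  filter_upwards [hC, rho_mem hρ, rho_lt hρ (1/(max C 1)) (by positivity)] with ε h1 h2 h3
  have hp : (0:ℝ) ≤ ρ ε ^ m := pow_nonneg h2.1.le m
  have h4 : C * ρ ε ≤ 1 := by
    have ha : C * ρ ε ≤ max C 1 * ρ ε := mul_le_mul_of_nonneg_right (le_max_left C 1) h2.1.le
    have hb : max C 1 * ρ ε < max C 1 * (1/(max C 1)) := by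
      exact mul_lt_mul_of_pos_left h3 hD
    have hc : max C 1 * (1/(max C 1)) = 1 := by field_simp
    linarith
  calc |u ε| ≤ C * ρ ε ^ (m+1) := h1
    _ = (C * ρ ε) * ρ ε ^ m := by ring
    _ ≤ 1 * ρ ε ^ m := mul_le_mul_of_nonneg_right h4 hp
    _ = ρ ε ^ m := one_mul _

lemma ngl_tendsto (hρ : Gauge ρ) {u : ℝ → ℝ} (hu : Ngl ρ u) : Tendsto u F (nhds 0) := by
  refine squeeze_zero_norm' (a := ρ) ?_ hρ.2
  filter_upwards [ngl_small hρ hu 1] with ε h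
  simpa using h

lemma ngl_add {u v : ℝ → ℝ} (hu : Ngl ρ u) (hv : Ngl ρ v) : Ngl ρ (u + v) := by
  intro N
  obtain ⟨C1, h1⟩ := hu N; obtain ⟨C2, h2⟩ := hv N
  refine ⟨C1 + C2, ?_⟩
  filter_upwards [h1, h2] with ε h1 h2
  calc |(u+v) ε| = |u ε + v ε| := rfl
    _ ≤ |u ε| + |v ε| := abs_add_le _ _
    _ ≤ C1 * ρ ε ^ N + C2 * ρ ε ^ N := add_le_add h1 h2
    _ = (C1 + C2) * ρ ε ^ N := by ring

lemma ngl_neg {u : ℝ → ℝ} (hu : Ngl ρ u) : Ngl ρ (-u) := by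
  intro N
  obtain ⟨C, h⟩ := hu N
  exact ⟨C, h.mono fun ε h => by simpa [abs_neg] using h⟩

lemma ngl_sub {u v : ℝ → ℝ} (hu : Ngl ρ u) (hv : Ngl ρ v) : Ngl ρ (u - v) := by
  have := ngl_add hu (ngl_neg hv); rwa [sub_eq_add_neg]

lemma ngl_zero : Ngl ρ 0 := fun N => ⟨0, Eventually.of_forall fun ε => by simp⟩

lemma ngl_of_eventually_zero {u : ℝ → ℝ} (h : ∀ᶠ ε in F, u ε = 0) : Ngl ρ u :=
  fun N => ⟨0, h.mono fun ε h => by simp [h]⟩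

lemma eqv_refl (x : ℝ → ℝ) : Eqv ρ x x := by
  unfold Eqv; rw [sub_self]; exact ngl_zero

lemma ngl_mul_mod (hρ : Gauge ρ) {u v : ℝ → ℝ} (hu : Ngl ρ u) (hv : Mod ρ v) :
    Ngl ρ (u * v) := by
  obtain ⟨M, C2, h2⟩ := hv
  intro N
  obtain ⟨C1, h1⟩ := hu (N + M)
  refine ⟨C1 * C2, ?_⟩
  filter_upwards [h1, h2, rho_mem hρ] with ε h1 h2 h3
  have hpow : (0:ℝ) < ρ ε ^ M := pow_pos h3.1 M
  have key : ρ ε ^ (N + M) * (ρ ε)⁻¹ ^ M = ρ ε ^ N := by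
    rw [inv_pow, pow_add]
    field_simp
  calc |(u*v) ε| = |u ε| * |v ε| := abs_mul _ _
    _ ≤ (C1 * ρ ε ^ (N+M)) * (C2 * (ρ ε)⁻¹ ^ M) := by
        exact mul_le_mul h1 h2 (abs_nonneg _) (le_trans (abs_nonneg _) h1)
    _ = (C1 * C2) * (ρ ε ^ (N+M) * (ρ ε)⁻¹ ^ M) := by ring
    _ = (C1 * C2) * ρ ε ^ N := by rw [key]

lemma mod_sub_ngl (hρ : Gauge ρ) {u v : ℝ → ℝ} (hu : Mod ρ u) (hv : Ngl ρ v) :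
    Mod ρ (u - v) := by
  obtain ⟨N, C, hC⟩ := hu
  refine ⟨N, C + 1, ?_⟩
  filter_upwards [hC, ngl_small hρ hv 0, rho_mem hρ] with ε h1 h2 h3
  have hi : (1:ℝ) ≤ (ρ ε)⁻¹ ^ N := one_le_pow₀ ((one_le_inv₀ h3.1).2 h3.2)
  calc |(u - v) ε| = |u ε - v ε| := rfl
    _ ≤ |u ε| + |v ε| := abs_sub _ _
    _ ≤ C * (ρ ε)⁻¹ ^ N + 1 := by simpa using add_le_add h1 h2
    _ ≤ C * (ρ ε)⁻¹ ^ N + 1 * (ρ ε)⁻¹ ^ N := by nlinarith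
    _ = (C + 1) * (ρ ε)⁻¹ ^ N := by ring


end copylemmas

lemma mod_zero : Mod ρ 0 := ⟨0, 0, Eventually.of_forall fun ε => by simp⟩

lemma ngl_of_eqv {x y : ℝ → ℝ} (h : Eqv ρ x y) : Ngl ρ (x - y) := h

-- (4) → (1)
lemma four_to_one (hρ : Gauge ρ) {x : ℝ → ℝ}
    (h : ∃ x', Mod ρ x' ∧ Eqv ρ x' x ∧ ∃ m : ℕ, ∀ᶠ ε in F, ρ ε ^ m < x' ε) :
    InvG ρ x ∧ leG ρ 0 x := by
  obtain ⟨x', hx'm, hx'e, m, hev⟩ := h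
  have hevpos : ∀ᶠ ε in F, 0 < x' ε := by
    filter_upwards [hev, rho_mem hρ] with ε h1 h2
    exact lt_trans (pow_pos h2.1 m) h1
  constructor
  · refine ⟨fun ε => (x' ε)⁻¹, ⟨m, 1, ?_⟩, ?_⟩
    · filter_upwards [hev, rho_mem hρ] with ε h1 h2
      have hx0 : 0 < x' ε := lt_trans (pow_pos h2.1 m) h1
      rw [abs_of_nonneg (inv_nonneg.2 hx0.le), one_mul, inv_pow]
      exact inv_anti₀ (pow_pos h2.1 m) h1.le
    · have heq : (x * (fun ε => (x' ε)⁻¹) - 1 : ℝ → ℝ)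
          = (x - x') * (fun ε => (x' ε)⁻¹) + (x' * (fun ε => (x' ε)⁻¹) - 1) := by
        funext ε; simp [Pi.sub_apply, Pi.mul_apply, Pi.add_apply]; ring
      show Ngl ρ _
      rw [heq]
      apply ngl_add
      · apply ngl_mul_mod hρ
        · have := ngl_neg (ngl_of_eqv hx'e)
          rwa [neg_sub] at this
        · refine ⟨m, 1, ?_⟩
          filter_upwards [hev, rho_mem hρ] with ε h1 h2
          have hx0 : 0 < x' ε := lt_trans (pow_pos h2.1 m) h1
          rw [abs_of_nonneg (inv_nonneg.2 hx0.le), one_mul, inv_pow]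
          exact inv_anti₀ (pow_pos h2.1 m) h1.le
      · apply ngl_of_eventually_zero
        filter_upwards [hevpos] with ε h1
        simp [Pi.sub_apply, Pi.mul_apply, mul_inv_cancel₀ h1.ne']
  · intro z hzm hze
    have hz : Ngl ρ z := by
      have := ngl_of_eqv hze; rwa [sub_zero] at this
    refine ⟨x', hx'm, hx'e, ?_⟩
    filter_upwards [ngl_small hρ hz m, hev] with ε h1 h2
    calc z ε ≤ |z ε| := le_abs_self _
      _ ≤ ρ ε ^ m := h1
      _ ≤ x' ε := h2.le

-- (1) → (2)
lemma one_to_two (hρ : Gauge ρ) {x : ℝ → ℝ} (h : InvG ρ x ∧ leG ρ 0 x)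
    {x' : ℝ → ℝ} (hx'm : Mod ρ x') (hx'e : Eqv ρ x' x) :
    ∀ᶠ ε in F, 0 < x' ε := by
  obtain ⟨⟨y, hym, hinv⟩, hle⟩ := h
  obtain ⟨y', _, hy'e, hy'pos⟩ := hle 0 mod_zero (eqv_refl 0)
  -- Ngl (x' * y - 1)
  have hngl1 : Ngl ρ (x' * y - 1) := by
    have heq : (x' * y - 1 : ℝ → ℝ) = (x' - x) * y + (x * y - 1) := by
      funext ε; simp [Pi.sub_apply, Pi.mul_apply, Pi.add_apply, Pi.one_apply]; ring
    rw [heq]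
    exact ngl_add (ngl_mul_mod hρ (ngl_of_eqv hx'e) hym) hinv
  obtain ⟨N, C, hC⟩ := hym
  set D := max C 1 with hD
  have hD1 : (1:ℝ) ≤ D := le_max_right C 1
  have hD0 : (0:ℝ) < D := lt_of_lt_of_le one_pos hD1
  have hyD : ∀ᶠ ε in F, |y ε| ≤ D * (ρ ε)⁻¹ ^ N := by
    filter_upwards [hC, rho_mem hρ] with ε h1 h2
    have : (0:ℝ) ≤ (ρ ε)⁻¹ ^ N := pow_nonneg (inv_nonneg.2 h2.1.le) N
    calc |y ε| ≤ C * (ρ ε)⁻¹ ^ N := h1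
      _ ≤ D * (ρ ε)⁻¹ ^ N := mul_le_mul_of_nonneg_right (le_max_left C 1) this
  have hhalf : ∀ᶠ ε in F, |x' ε * y ε - 1| < 1/2 := by
    have ht := ngl_tendsto hρ hngl1
    have : ∀ᶠ t in nhds (0:ℝ), |t| < 1/2 := by
      have := Metric.ball_mem_nhds (0:ℝ) (by norm_num : (0:ℝ) < 1/2)
      filter_upwards [this] with t ht
      simpa [Real.dist_eq] using ht
    have := ht.eventually this
    filter_upwards [this] with ε h
    simpa [Pi.sub_apply, Pi.mul_apply, Pi.one_apply] using h
  have hy'd : ∀ᶠ ε in F, |x' ε - y' ε| ≤ ρ ε ^ (N+1) := by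
    have : Ngl ρ (x' - y') := by
      have heq : (x' - y' : ℝ → ℝ) = (x' - x) - (y' - x) := by
        funext ε; simp only [Pi.sub_apply]; ring
      rw [heq]; exact ngl_sub (ngl_of_eqv hx'e) (ngl_of_eqv hy'e)
    exact ngl_small hρ this (N+1)
  filter_upwards [hhalf, hy'd, hy'pos, hyD, rho_mem hρ,
    rho_lt hρ (1/(2*D)) (one_div_pos.2 (by linarith))]
    with ε h1 h2 h3 h4 h5 h6
  simp only [Pi.zero_apply] at h3
  by_contra hcon
  push_neg at hcon
  have hP : (0:ℝ) < ρ ε ^ N := pow_pos h5.1 N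
  -- x' y > 1/2
  have hxy : 1/2 ≤ x' ε * y ε := by
    have := abs_lt.1 h1
    linarith [this.1]
  -- |x'| ≤ ρ^{N+1}
  have hax : |x' ε| ≤ ρ ε ^ (N+1) := by
    rw [abs_of_nonpos hcon]
    have : -(ρ ε ^ (N+1)) ≤ x' ε - y' ε := (abs_le.1 h2).1
    linarith [h3]
  have hxyabs : x' ε * y ε ≤ |x' ε| * |y ε| := by
    calc x' ε * y ε ≤ |x' ε * y ε| := le_abs_self _
      _ = |x' ε| * |y ε| := abs_mul _ _
  have hprod : |x' ε| * |y ε| ≤ ρ ε ^ (N+1) * (D * (ρ ε)⁻¹ ^ N) :=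
    mul_le_mul hax h4 (abs_nonneg _) (pow_nonneg h5.1.le _)
  have hkey : ρ ε ^ (N+1) * (D * (ρ ε)⁻¹ ^ N) = D * ρ ε := by
    rw [inv_pow, pow_succ]
    field_simp
  have : D * ρ ε < D * (1/(2*D)) := mul_lt_mul_of_pos_left h6 hD0
  have hDD : D * (1/(2*D)) = 1/2 := by field_simp
  linarith [hxy, hxyabs, hprod]

-- (2) → (3)
lemma two_to_three (hρ : Gauge ρ) {x : ℝ → ℝ}
    (h2 : ∀ x'', Mod ρ x'' → Eqv ρ x'' x → ∀ᶠ ε in F, 0 < x'' ε)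
    {x' : ℝ → ℝ} (hm : Mod ρ x') (he : Eqv ρ x' x) :
    ∃ m : ℕ, ∀ᶠ ε in F, ρ ε ^ m < x' ε := by
  classical
  by_contra hcon
  push_neg at hcon
  have hfreq : ∀ m : ℕ, ∃ᶠ ε in F, x' ε ≤ ρ ε ^ m := by
    intro m
    have h := hcon m
    exact h
  have hsel : ∀ m : ℕ, ∃ ε : ℝ, (0 < ε ∧ ε < 1/((m:ℝ)+1)) ∧ x' ε ≤ ρ ε ^ m := by
    intro m
    have hev : ∀ᶠ ε in F, 0 < ε ∧ ε < 1/((m:ℝ)+1) :=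
      eps_pos.and (eventually_lt_F _ (by positivity))
    obtain ⟨ε, h1, h2⟩ := ((hfreq m).and_eventually hev).exists
    exact ⟨ε, h2, h1⟩
  choose e he1 he2 using hsel
  set d : ℝ → ℝ := fun ε => if h : ∃ m, e m = ε then ρ ε ^ (Nat.find h) else 0 with hd
  have hd_ngl : Ngl ρ d := by
    intro N
    refine ⟨1, ?_⟩
    have hne : ∀ᶠ ε in F, ∀ m ∈ Set.Iio N, e m ≠ ε := by
      rw [eventually_all_finite (Set.finite_Iio N)]
      intro m _
      filter_upwards [eventually_lt_F (e m) (he1 m).1] with ε hε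
      exact fun hc => absurd hc.symm (ne_of_lt hε)
    filter_upwards [hne, rho_mem hρ] with ε hεne hρε
    by_cases h : ∃ m, e m = ε
    · have hdd : d ε = ρ ε ^ (Nat.find h) := dif_pos h
      have hfind : N ≤ Nat.find h := by
        by_contra hlt
        push_neg at hlt
        exact hεne _ hlt (Nat.find_spec h)
      rw [hdd, abs_of_nonneg (pow_nonneg hρε.1.le _), one_mul]
      exact pow_le_pow_of_le_one hρε.1.le hρε.2 hfind
    · have hdd : d ε = 0 := dif_neg h
      rw [hdd]
      simp [pow_nonneg hρε.1.le]
  have hmod'' : Mod ρ (x' - d) := mod_sub_ngl hρ hm hd_ngl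
  have heqv'' : Eqv ρ (x' - d) x := by
    show Ngl ρ _
    have heq : ((x' - d) - x : ℝ → ℝ) = (x' - x) - d := by
      funext ε; simp [Pi.sub_apply]; ring
    rw [heq]
    exact ngl_sub (ngl_of_eqv he) hd_ngl
  have hpos := h2 (x' - d) hmod'' heqv''
  have htend0 : Tendsto e atTop (nhds (0:ℝ)) := by
    apply squeeze_zero (fun m => (he1 m).1.le) (fun m => (he1 m).2.le)
    exact tendsto_one_div_add_atTop_nhds_zero_nat
  have htend : Tendsto e atTop F := by
    apply tendsto_nhdsWithin_of_tendsto_nhds_of_eventually_within _ htend0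
    exact Eventually.of_forall fun m => (he1 m).1
  obtain ⟨m, hm'⟩ := (htend.eventually hpos).exists
  have hex : ∃ k, e k = e m := ⟨m, rfl⟩
  have hdm : d (e m) = ρ (e m) ^ (Nat.find hex) := dif_pos hex
  have hkey : x' (e m) ≤ ρ (e m) ^ (Nat.find hex) := by
    have hsp : e (Nat.find hex) = e m := Nat.find_spec hex
    have := he2 (Nat.find hex)
    rwa [hsp] at this
  have : (x' - d) (e m) ≤ 0 := by
    simp only [Pi.sub_apply, hdm]
    linarith
  linarith


/-- Mayer's lemma: characterizations of positive invertible generalized numbers. -/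
theorem mayer_lemma (ρ : ℝ → ℝ) (hρ : Gauge ρ) (x : ℝ → ℝ) (hx : Mod ρ x) :
    List.TFAE
      [InvG ρ x ∧ leG ρ 0 x,
       ∀ x', Mod ρ x' → Eqv ρ x' x → ∀ᶠ ε in F, 0 < x' ε,
       ∀ x', Mod ρ x' → Eqv ρ x' x → ∃ m : ℕ, ∀ᶠ ε in F, ρ ε ^ m < x' ε,
       ∃ x', Mod ρ x' ∧ Eqv ρ x' x ∧ ∃ m : ℕ, ∀ᶠ ε in F, ρ ε ^ m < x' ε] := by
  tfae_have 1 → 2 := fun h x' hm he => one_to_two hρ h hm he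
  tfae_have 2 → 3 := fun h x' hm he => two_to_three hρ h hm he
  tfae_have 3 → 4 := fun h => ⟨x, hx, eqv_refl x, h x hx (eqv_refl x)⟩
  tfae_have 4 → 1 := fun h => four_to_one hρ h
  tfae_finish

end RC
end

section
/- A generalized complex number z ∈ ℂ̃_ρ is invertible in the ring ℂ̃_ρ if and only if its generalized absolute value |z| ∈ ℝ̃_ρ is invertible in ℝ̃_ρ. -/
open Filter Topology

namespace RC

lemma ev_Ioc : ∀ᶠ ε in F, ε ∈ Set.Ioc (0:ℝ) 1 := by
  have h1 : ∀ᶠ ε in F, ε ∈ Set.Ioi (0:ℝ) := self_mem_nhdsWithin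
  have h2 : ∀ᶠ ε in F, ε < 1 :=
    eventually_nhdsWithin_of_eventually_nhds (eventually_lt_nhds zero_lt_one)
  filter_upwards [h1, h2] with ε he hl
  exact ⟨he, hl.le⟩

lemma ev_rho (ρ : ℝ → ℝ) (hρ : Gauge ρ) : ∀ᶠ ε in F, ρ ε ∈ Set.Ioc (0:ℝ) 1 :=
  ev_Ioc.mono fun ε h => hρ.1 ε h

lemma ev_inv_one_le (ρ : ℝ → ℝ) (hρ : Gauge ρ) :
    ∀ᶠ ε in F, (0 < ρ ε) ∧ 1 ≤ (ρ ε)⁻¹ := by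
  filter_upwards [ev_rho ρ hρ] with ε h
  refine ⟨h.1, ?_⟩
  have hinv : 0 < (ρ ε)⁻¹ := inv_pos.mpr h.1
  nlinarith [mul_inv_cancel₀ h.1.ne', h.2]

lemma mod_mul (ρ x y : ℝ → ℝ) (hx : Mod ρ x) (hy : Mod ρ y) : Mod ρ (x * y) := by
  obtain ⟨N1, C1, h1⟩ := hx
  obtain ⟨N2, C2, h2⟩ := hy
  refine ⟨N1 + N2, C1 * C2, ?_⟩
  filter_upwards [h1, h2] with ε hx1 hy1
  have hnn1 : (0:ℝ) ≤ C1 * (ρ ε)⁻¹ ^ N1 := le_trans (abs_nonneg _) hx1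
  calc |(x*y) ε| = |x ε| * |y ε| := by simp [abs_mul]
    _ ≤ (C1 * (ρ ε)⁻¹ ^ N1) * (C2 * (ρ ε)⁻¹ ^ N2) := mul_le_mul hx1 hy1 (abs_nonneg _) hnn1
    _ = C1 * C2 * (ρ ε)⁻¹ ^ (N1 + N2) := by rw [pow_add]; ring

lemma mod_add_one (ρ x : ℝ → ℝ) (hρ : Gauge ρ) (hx : Mod ρ x) : Mod ρ (x + 1) := by
  obtain ⟨N, C, h⟩ := hx
  refine ⟨N, C + 1, ?_⟩
  filter_upwards [h, ev_inv_one_le ρ hρ] with ε h1 h2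
  have hp : 1 ≤ (ρ ε)⁻¹ ^ N := one_le_pow₀ h2.2
  have habs : |(x + 1) ε| ≤ |x ε| + 1 := by
    simpa using (abs_add_le (x ε) 1)
  calc |(x + 1) ε| ≤ |x ε| + 1 := habs
    _ ≤ C * (ρ ε)⁻¹ ^ N + (ρ ε)⁻¹ ^ N := by linarith
    _ = (C + 1) * (ρ ε)⁻¹ ^ N := by ring

lemma ngl_mul_mod_s4 (ρ n m : ℝ → ℝ) (hρ : Gauge ρ) (hn : Ngl ρ n) (hm : Mod ρ m) :
    Ngl ρ (n * m) := by
  obtain ⟨Nm, Cm, hCm⟩ := hm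
  intro N
  obtain ⟨C, hC⟩ := hn (N + Nm)
  refine ⟨C * Cm, ?_⟩
  filter_upwards [hC, hCm, ev_rho ρ hρ] with ε h1 h2 h3
  have key : ρ ε ^ (N + Nm) * (ρ ε)⁻¹ ^ Nm = ρ ε ^ N := by
    rw [pow_add, mul_assoc, ← mul_pow, mul_inv_cancel₀ h3.1.ne', one_pow, mul_one]
  have hnn : (0:ℝ) ≤ C * ρ ε ^ (N + Nm) := le_trans (abs_nonneg _) h1
  calc |(n*m) ε| = |n ε| * |m ε| := by simp [abs_mul]
    _ ≤ (C * ρ ε ^ (N+Nm)) * (Cm * (ρ ε)⁻¹ ^ Nm) := mul_le_mul h1 h2 (abs_nonneg _) hnn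
    _ = C * Cm * (ρ ε ^ (N+Nm) * (ρ ε)⁻¹ ^ Nm) := by ring
    _ = C * Cm * ρ ε ^ N := by rw [key]

lemma mod_absC (ρ : ℝ → ℝ) (z : ℝ → ℂ) (hz : ModC ρ z) : Mod ρ (absC z) := by
  obtain ⟨N, C, h⟩ := hz
  exact ⟨N, C, h.mono fun ε hε => by
    simpa [absC, abs_of_nonneg (norm_nonneg _)] using hε⟩

/-- `z ∈ ℂ̃_ρ` is invertible iff `|z| ∈ ℝ̃_ρ` is invertible. -/
theorem invertible_iff_abs_invertible (ρ : ℝ → ℝ) (hρ : Gauge ρ)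
    (z : ℝ → ℂ) (hz : ModC ρ z) :
    InvC ρ z ↔ InvG ρ (absC z) := by
  constructor
  · rintro ⟨w, hw, hzw⟩
    refine ⟨absC w, mod_absC ρ w hw, ?_⟩
    intro N
    obtain ⟨C, h⟩ := hzw N
    refine ⟨C, ?_⟩
    filter_upwards [h] with ε hε
    have key : |‖z ε * w ε‖ - 1| ≤ ‖z ε * w ε - 1‖ := by
      simpa using abs_norm_sub_norm_le (z ε * w ε) 1
    have heq : (absC z * absC w - 1) ε = ‖z ε * w ε‖ - 1 := by
      simp [absC, map_mul]
    rw [heq]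
    exact key.trans (by simpa using hε)
  · rintro ⟨y, hy, hxy⟩
    set w : ℝ → ℂ := fun ε => (starRingEnd ℂ) (z ε) * (y ε : ℂ) * (y ε : ℂ) with hw
    have habs : Mod ρ (absC z) := mod_absC ρ z hz
    refine ⟨w, ?_, ?_⟩
    · have hm : Mod ρ (absC z * (y * y)) := mod_mul _ _ _ habs (mod_mul _ _ _ hy hy)
      obtain ⟨N, C, h⟩ := hm
      refine ⟨N, C, ?_⟩
      filter_upwards [h] with ε hε
      have heq : ‖w ε‖ = |(absC z * (y*y)) ε| := by
        simp [hw, absC, map_mul, abs_mul, abs_of_nonneg (norm_nonneg (z ε))]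
        rw [mul_assoc, abs_mul_abs_self]
      rw [heq]; exact hε
    · intro N
      have hmod : Mod ρ (absC z * y + 1) := mod_add_one _ _ hρ (mod_mul _ _ _ habs hy)
      have hng : Ngl ρ (absC z * y - 1) := hxy
      have hg : Ngl ρ ((absC z * y - 1) * (absC z * y + 1)) :=
        ngl_mul_mod_s4 ρ _ _ hρ hng hmod
      obtain ⟨C, h⟩ := hg N
      refine ⟨C, ?_⟩
      filter_upwards [h] with ε hε
      have hz2 : z ε * (starRingEnd ℂ) (z ε) = ((‖z ε‖^2 : ℝ) : ℂ) := by
        rw [Complex.mul_conj]; norm_cast; exact (Complex.sq_norm _).symm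
      have h1 : (z * w - 1) ε
          = (((‖z ε‖^2 * y ε * y ε - 1 : ℝ)) : ℂ) := by
        simp only [Pi.sub_apply, Pi.mul_apply, Pi.one_apply, hw]
        rw [show z ε * ((starRingEnd ℂ) (z ε) * (y ε : ℂ) * (y ε : ℂ))
            = (z ε * (starRingEnd ℂ) (z ε)) * (y ε : ℂ) * (y ε : ℂ) by ring, hz2]
        push_cast; ring
      have h2 : ‖(z * w - 1) ε‖
          = |((absC z * y - 1) * (absC z * y + 1)) ε| := by
        rw [h1, Complex.norm_real, Real.norm_eq_abs]
        simp only [Pi.mul_apply, Pi.sub_apply, Pi.add_apply, Pi.one_apply, absC]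
        ring_nf
      rw [h2]; exact hε

end RC
end

section
/- If the closed ball satisfies cl B_r(c) ⊆ ⟨A_ε⟩ for a net (A_ε) of subsets of ℂ, with c = [c_ε] and r = [r_ε] > 0, then E_{r_ε}(c_ε) ⊆ A_ε for all ε sufficiently small. -/
open Filter Topology

namespace RC

/-- Membership in the internal set `[A_ε]` of complex subsets. -/
def memIntC (ρ : ℝ → ℝ) (A : ℝ → Set ℂ) (x : ℝ → ℂ) : Prop :=
  ∃ x', ModC ρ x' ∧ EqvC ρ x' x ∧ ∀ᶠ ε in F, x' ε ∈ A ε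

/-- Membership in the strongly internal set `⟨A_ε⟩` of complex subsets. -/
def memStrC (ρ : ℝ → ℝ) (A : ℝ → Set ℂ) (x : ℝ → ℂ) : Prop :=
  ∀ x', ModC ρ x' → EqvC ρ x' x → ∀ᶠ ε in F, x' ε ∈ A ε

lemma F_neBot : F.NeBot := nhdsGT_neBot 0

lemma gauge_mem {ρ : ℝ → ℝ} (hρ : Gauge ρ) : ∀ᶠ ε in F, 0 < ρ ε ∧ ρ ε ≤ 1 := by
  have hmem : Set.Ioc (0:ℝ) 1 ∈ F :=
    Ioc_mem_nhdsGT_of_mem ⟨le_refl 0, one_pos⟩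
  filter_upwards [hmem] with ε hε
  exact hρ.1 ε hε

lemma inv_pow_mono {a : ℝ} (h0 : 0 < a) (h1 : a ≤ 1) {m n : ℕ} (hmn : m ≤ n) :
    a⁻¹ ^ m ≤ a⁻¹ ^ n :=
  pow_le_pow_right₀ ((one_le_inv₀ h0).mpr h1) hmn

lemma rpos_of_posInv (ρ : ℝ → ℝ) (hρ : Gauge ρ) (r : ℝ → ℝ) (hrpos : posInv ρ r) :
    ∀ᶠ ε in F, 0 < r ε := by
  obtain ⟨hle, y, hyMod, hyInv⟩ := hrpos
  obtain ⟨y', _, hy'r, hy'pos⟩ := hle 0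
    ⟨0, 0, by filter_upwards with ε; simp⟩
    (fun N => ⟨0, by filter_upwards with ε; simp⟩)
  obtain ⟨N1, C1, hy⟩ := hyMod
  obtain ⟨C2, hinv⟩ := hyInv 1
  obtain ⟨C3, hy'r'⟩ := hy'r (N1 + 1)
  have hC2 : ∀ᶠ ε in F, C2 * ρ ε < 1/2 := by
    have : Tendsto (fun ε => C2 * ρ ε) F (nhds (C2 * 0)) := hρ.2.const_mul C2
    rw [mul_zero] at this
    exact this.eventually_lt_const (by norm_num)
  have hC3 : ∀ᶠ ε in F, C3 * ρ ε < 1 / (2 * max C1 1) := by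
    have : Tendsto (fun ε => C3 * ρ ε) F (nhds (C3 * 0)) := hρ.2.const_mul C3
    rw [mul_zero] at this
    exact this.eventually_lt_const (by positivity)
  filter_upwards [gauge_mem hρ, hy, hinv, hy'r', hC2, hC3, hy'pos] with ε
    hρε hy hinv hy'r' hC2 hC3 hy'pos
  obtain ⟨hρ0, hρ1⟩ := hρε
  have pNpos : (0:ℝ) < ρ ε ^ N1 := pow_pos hρ0 N1
  simp only [Pi.mul_apply, Pi.sub_apply, Pi.zero_apply, Pi.one_apply, sub_zero,
    pow_one] at hinv hy'r' hy'pos hy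
  -- |r ε * y ε| ≥ 1/2
  have habs : (1:ℝ) - C2 * ρ ε ≤ |r ε * y ε| := by
    have h1 : (1:ℝ) ≤ |r ε * y ε| + |r ε * y ε - 1| := by
      have h := abs_sub_abs_le_abs_sub (1:ℝ) (r ε * y ε)
      rw [abs_one, abs_sub_comm] at h
      linarith
    linarith
  have hry : (1:ℝ)/2 ≤ |r ε| * |y ε| := by
    rw [← abs_mul]; linarith
  have hyε : 0 < |y ε| := by
    rcases lt_or_ge 0 (|y ε|) with h | h
    · exact h
    · exfalso; nlinarith [abs_nonneg (r ε)]
  have hqpos : (0:ℝ) < (ρ ε)⁻¹ ^ N1 := pow_pos (inv_pos.mpr hρ0) N1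
  have hC1pos : 0 < C1 := by
    have h2 : 0 < C1 * (ρ ε)⁻¹ ^ N1 := lt_of_lt_of_le hyε hy
    nlinarith
  have hy2 : |y ε| ≤ C1 * (ρ ε ^ N1)⁻¹ := by rwa [inv_pow] at hy
  have hrabs : ρ ε ^ N1 / (2 * C1) ≤ |r ε| := by
    rw [div_le_iff₀ (by positivity)]
    nlinarith [mul_le_mul_of_nonneg_left hy2 (abs_nonneg (r ε)),
      mul_inv_cancel₀ pNpos.ne', abs_nonneg (r ε)]
  by_contra hr0
  push_neg at hr0
  have hrneg : ρ ε ^ N1 / (2 * C1) ≤ -r ε := by rwa [abs_of_nonpos hr0] at hrabs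
  have h6 : y' ε - r ε ≤ C3 * ρ ε ^ (N1 + 1) := le_trans (le_abs_self _) hy'r'
  have hmax : 1 / (2 * max C1 1) ≤ 1 / (2 * C1) :=
    one_div_le_one_div_of_le (by linarith) (by nlinarith [le_max_left C1 1])
  have hlt : C3 * ρ ε ^ (N1 + 1) < ρ ε ^ N1 / (2 * C1) := by
    have heq : C3 * ρ ε ^ (N1 + 1) = (C3 * ρ ε) * ρ ε ^ N1 := by ring
    rw [heq]
    calc (C3 * ρ ε) * ρ ε ^ N1 < (1 / (2 * max C1 1)) * ρ ε ^ N1 :=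
          mul_lt_mul_of_pos_right hC3 pNpos
      _ ≤ (1 / (2 * C1)) * ρ ε ^ N1 := mul_le_mul_of_nonneg_right hmax pNpos.le
      _ = ρ ε ^ N1 / (2 * C1) := by ring
  linarith

/-- If the closed sharp ball is contained in the strongly internal set `⟨A_ε⟩`, then
`E_{r_ε}(c_ε) ⊆ A_ε` for ε small. -/
theorem closedBall_subset_stronglyInternal (ρ : ℝ → ℝ) (hρ : Gauge ρ)
    (c : ℝ → ℂ) (hc : ModC ρ c) (r : ℝ → ℝ) (hr : Mod ρ r) (hrpos : posInv ρ r)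
    (A : ℝ → Set ℂ)
    (h : ∀ z, ModC ρ z → leG ρ (absC (z - c)) r → memStrC ρ A z) :
    ∀ᶠ ε in F, Metric.ball (c ε) (r ε) ⊆ A ε := by
  by_contra hcon
  rw [Filter.not_eventually] at hcon
  classical
  set S : ℝ → Set ℂ := fun ε => Metric.ball (c ε) (r ε) \ A ε with hS
  set z : ℝ → ℂ := fun ε => if hne : (S ε).Nonempty then hne.choose else c ε with hz
  have hrposev : ∀ᶠ ε in F, 0 < r ε := rpos_of_posInv ρ hρ r hrpos
  -- pointwise distance bound
  have P1 : ∀ ε, ‖z ε - c ε‖ ≤ max (r ε) 0 := by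
    intro ε
    by_cases hne : (S ε).Nonempty
    · have hmem := hne.choose_spec
      have : z ε = hne.choose := by simp [hz, hne]
      rw [this]
      have hball : hne.choose ∈ Metric.ball (c ε) (r ε) := hmem.1
      rw [Metric.mem_ball, Complex.dist_eq] at hball
      exact le_trans hball.le (le_max_left _ _)
    · have : z ε = c ε := by simp [hz, hne]
      simp [this]
  -- frequently z ε ∉ A ε
  have P2 : ∃ᶠ ε in F, z ε ∉ A ε := by
    apply hcon.mono
    intro ε hε
    have hne : (S ε).Nonempty := Set.diff_nonempty.mpr hε
    have : z ε = hne.choose := by simp [hz, hne]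
    rw [this]
    exact hne.choose_spec.2
  -- z is moderate
  have hzmod : ModC ρ z := by
    obtain ⟨Nc, Cc, hcb⟩ := hc
    obtain ⟨Nr, Cr, hrb⟩ := hr
    refine ⟨Nc + Nr, |Cc| + |Cr|, ?_⟩
    filter_upwards [gauge_mem hρ, hcb, hrb] with ε hρε hcb hrb
    have h1 : ‖z ε‖ ≤ ‖c ε‖ + |r ε| := by
      have htri : ‖c ε + (z ε - c ε)‖ ≤
          ‖c ε‖ + ‖z ε - c ε‖ := norm_add_le _ _
      have : c ε + (z ε - c ε) = z ε := by ring
      rw [this] at htri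
      have hmax : max (r ε) 0 ≤ |r ε| := max_le (le_abs_self _) (abs_nonneg _)
      linarith [P1 ε]
    have hmono1 : (ρ ε)⁻¹ ^ Nc ≤ (ρ ε)⁻¹ ^ (Nc + Nr) :=
      inv_pow_mono hρε.1 hρε.2 (Nat.le_add_right _ _)
    have hmono2 : (ρ ε)⁻¹ ^ Nr ≤ (ρ ε)⁻¹ ^ (Nc + Nr) :=
      inv_pow_mono hρε.1 hρε.2 (Nat.le_add_left _ _)
    have hq1 : (0:ℝ) ≤ (ρ ε)⁻¹ ^ Nc := pow_nonneg (inv_nonneg.mpr hρε.1.le) _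
    have hq2 : (0:ℝ) ≤ (ρ ε)⁻¹ ^ Nr := pow_nonneg (inv_nonneg.mpr hρε.1.le) _
    have e1 : Cc * (ρ ε)⁻¹ ^ Nc ≤ |Cc| * (ρ ε)⁻¹ ^ (Nc + Nr) :=
      le_trans (mul_le_mul_of_nonneg_right (le_abs_self _) hq1)
        (mul_le_mul_of_nonneg_left hmono1 (abs_nonneg _))
    have e2 : Cr * (ρ ε)⁻¹ ^ Nr ≤ |Cr| * (ρ ε)⁻¹ ^ (Nc + Nr) :=
      le_trans (mul_le_mul_of_nonneg_right (le_abs_self _) hq2)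
        (mul_le_mul_of_nonneg_left hmono2 (abs_nonneg _))
    have : |(r ε)| ≤ Cr * (ρ ε)⁻¹ ^ Nr := hrb
    calc ‖z ε‖ ≤ ‖c ε‖ + |r ε| := h1
      _ ≤ Cc * (ρ ε)⁻¹ ^ Nc + Cr * (ρ ε)⁻¹ ^ Nr := by linarith
      _ ≤ |Cc| * (ρ ε)⁻¹ ^ (Nc + Nr) + |Cr| * (ρ ε)⁻¹ ^ (Nc + Nr) := by linarith
      _ = (|Cc| + |Cr|) * (ρ ε)⁻¹ ^ (Nc + Nr) := by ring
  -- |z - c| ≤ r as generalized numbers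
  have hle : leG ρ (absC (z - c)) r := by
    intro x' hx'mod hx'eq
    refine ⟨fun ε => r ε + (x' ε - absC (z - c) ε), ?_, ?_, ?_⟩
    · -- moderate
      obtain ⟨Nr, Cr, hrb⟩ := hr
      obtain ⟨Cw, hw⟩ := hx'eq 0
      refine ⟨Nr, |Cr| + |Cw|, ?_⟩
      filter_upwards [gauge_mem hρ, hrb, hw] with ε hρε hrb hw
      simp only [Pi.sub_apply, pow_zero, mul_one] at hw
      have hone : (1:ℝ) ≤ (ρ ε)⁻¹ ^ Nr := by
        calc (1:ℝ) = (ρ ε)⁻¹ ^ 0 := (pow_zero _).symm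
          _ ≤ (ρ ε)⁻¹ ^ Nr := inv_pow_mono hρε.1 hρε.2 (Nat.zero_le _)
      have hq : (0:ℝ) ≤ (ρ ε)⁻¹ ^ Nr := pow_nonneg (inv_nonneg.mpr hρε.1.le) _
      have habs1 : |x' ε - absC (z - c) ε| ≤ |Cw| := le_trans hw (le_abs_self _)
      have habs2 : |Cw| ≤ |Cw| * (ρ ε)⁻¹ ^ Nr := le_mul_of_one_le_right (abs_nonneg _) hone
      have e1 : Cr * (ρ ε)⁻¹ ^ Nr ≤ |Cr| * (ρ ε)⁻¹ ^ Nr :=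
        mul_le_mul_of_nonneg_right (le_abs_self _) hq
      calc |r ε + (x' ε - absC (z - c) ε)| ≤ |r ε| + |x' ε - absC (z - c) ε| :=
            abs_add_le _ _
        _ ≤ Cr * (ρ ε)⁻¹ ^ Nr + |Cw| * (ρ ε)⁻¹ ^ Nr := by linarith
        _ ≤ (|Cr| + |Cw|) * (ρ ε)⁻¹ ^ Nr := by nlinarith
    · -- equivalent to r
      have hfun : (fun ε => r ε + (x' ε - absC (z - c) ε)) - r = x' - absC (z - c) := by
        funext ε; simp only [Pi.sub_apply]; ring
      show Ngl ρ _
      rw [hfun]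
      exact hx'eq
    · -- x' ≤ y'
      filter_upwards [hrposev] with ε hrε
      have h1 : absC (z - c) ε ≤ r ε := by
        have : absC (z - c) ε = ‖z ε - c ε‖ := by simp [absC]
        rw [this]
        have := P1 ε
        rw [max_eq_left hrε.le] at this
        exact this
      linarith
  -- conclude
  have hmem : memStrC ρ A z := h z hzmod hle
  have hev : ∀ᶠ ε in F, z ε ∈ A ε := by
    apply hmem z hzmod
    intro N
    exact ⟨0, by filter_upwards with ε; simp⟩
  obtain ⟨ε, hε1, hε2⟩ := (P2.and_eventually hev).exists
  exact hε1 hε2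

end RC
end
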